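/- For all n ≥ 1, the specialization ((q/a)^{n-1} P(T_{2,n}))|_{a=0}, viewed as a Laurent polynomial in q, has the form q^{n-1} times a polynomial in s = q^{-1} - q of degree n-1 (in s, allowing s^{-1} exactly when n is even), whose leading coefficient in s is 1. -/

import Mathlib

open LaurentPolynomial

/-- The variable `q`, living in the field `ℚ(q)` of rational functions. -/
noncomputable def q0 : RatFunc ℚ := RatFunc.X

/-- The HOMFLY polynomials `P(T_{2,n})` of the `(2,n)` torus links, as Laurent
polynomials in the variable `a` (the Laurent variable `T`) with coefficients in `ℚ(q)`:
`P(T_{2,0}) = (a - a⁻¹)/(q - q⁻¹)`, `P(T_{2,1}) = 1`, and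
`P(T_{2,n}) = -a(q - q⁻¹) P(T_{2,n-1}) + a² P(T_{2,n-2})` for `n ≥ 2`. -/
noncomputable def P : ℕ → LaurentPolynomial (RatFunc ℚ)
  | 0 => (T 1 - T (-1)) * C (q0 - q0⁻¹)⁻¹
  | 1 => 1
  | n + 2 => -(T 1 * C (q0 - q0⁻¹)) * P (n + 1) + T 1 ^ 2 * P n

/-- The specialization at `a = 0`: the constant term in `a` of a Laurent polynomial. -/
noncomputable def specA (p : LaurentPolynomial (RatFunc ℚ)) : RatFunc ℚ := p.coeff 0

/-- The coefficients in `s = q⁻¹ - q` of the constant terms. -/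
def cc : ℕ → ℤ → ℤ
  | 0, _ => 0
  | 1, i => if i = 0 then 1 else 0
  | 2, i => if i = 1 ∨ i = -1 then 1 else 0
  | (n + 3), i => cc (n + 2) (i - 1) + cc (n + 1) i

lemma two_step_induction {Q : ℕ → Prop} (h1 : Q 1) (h2 : Q 2)
    (hstep : ∀ n : ℕ, Q (n + 1) → Q (n + 2) → Q (n + 3)) : ∀ n, 1 ≤ n → Q n := by
  have key : ∀ n, Q (n + 1) ∧ Q (n + 2) := by
    intro n
    induction n with
    | zero => exact ⟨h1, h2⟩
    | succ k ih => exact ⟨ih.2, hstep k ih.1 ih.2⟩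
  intro n hn
  obtain ⟨m, rfl⟩ := Nat.exists_eq_add_of_le hn
  simpa [Nat.add_comm] using (key m).1

lemma cc_prop : ∀ n, 1 ≤ n →
    cc n ((n : ℤ) - 1) = 1 ∧ (∀ i : ℤ, (n : ℤ) - 1 < i → cc n i = 0) ∧
    (∀ i : ℤ, i < -1 → cc n i = 0) ∧ cc n (-1) = (if Even n then 1 else 0) := by
  apply two_step_induction
  · refine ⟨by norm_num [cc], fun i hi => ?_, fun i hi => ?_, by norm_num [cc, Nat.even_iff]⟩
    · simp only [cc]; rw [if_neg]; omega
    · simp only [cc]; rw [if_neg]; omega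
  · refine ⟨by norm_num [cc], fun i hi => ?_, fun i hi => ?_, by norm_num [cc]⟩
    · simp only [cc]; rw [if_neg]; omega
    · simp only [cc]; rw [if_neg]; omega
  · intro n ih1 ih2
    obtain ⟨e1, htop1, hbot1, hm1⟩ := ih1
    obtain ⟨e2, htop2, hbot2, hm2⟩ := ih2
    refine ⟨?_, fun i hi => ?_, fun i hi => ?_, ?_⟩
    · show cc (n + 2) (((n : ℤ) + 3) - 1 - 1) + cc (n + 1) (((n : ℤ) + 3) - 1) = 1
      rw [htop1 _ (by push_cast; omega)]
      have : ((n : ℤ) + 3) - 1 - 1 = ((n : ℤ) + 2) - 1 := by ring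
      rw [this]
      have : ((n : ℤ) + 2) - 1 = (((n : ℕ) + 2 : ℕ) : ℤ) - 1 := by push_cast; ring
      rw [this, e2]
      ring
    · show cc (n + 2) (i - 1) + cc (n + 1) i = 0
      rw [htop1 _ (by push_cast at hi ⊢; omega), htop2 _ (by push_cast at hi ⊢; omega)]
      ring
    · show cc (n + 2) (i - 1) + cc (n + 1) i = 0
      rw [hbot1 _ (by omega), hbot2 _ (by omega)]
      ring
    · show cc (n + 2) (-1 - 1) + cc (n + 1) (-1) = _
      rw [hbot2 _ (by omega), hm1]
      have heq : Even (n + 3) ↔ Even (n + 1) := by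
        rw [Nat.even_add_one, Nat.even_add_one, Nat.even_add_one, not_not]
      by_cases h : Even (n + 1)
      · rw [if_pos h, if_pos (heq.mpr h)]; ring
      · rw [if_neg h, if_neg (fun hh => h (heq.mp hh))]; ring


noncomputable def s0 : RatFunc ℚ := q0⁻¹ - q0

lemma s0_ne : s0 ≠ 0 := by
  intro h
  have hq : q0 ≠ 0 := RatFunc.X_ne_zero
  have h2 : q0 * q0 = 1 := by
    have hinv : q0⁻¹ = q0 := sub_eq_zero.mp h
    calc q0 * q0 = q0 * q0⁻¹ := by rw [hinv]
    _ = 1 := mul_inv_cancel₀ hq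
  have h3 : (Polynomial.X * Polynomial.X : Polynomial ℚ) = 1 := by
    apply RatFunc.algebraMap_injective
    simpa [q0, RatFunc.algebraMap_X] using h2
  have := congrArg Polynomial.natDegree h3
  rw [Polynomial.natDegree_one, Polynomial.natDegree_X_mul Polynomial.X_ne_zero,
    Polynomial.natDegree_X] at this
  omega

lemma T_mul_coeff (m k : ℤ) (f : LaurentPolynomial (RatFunc ℚ)) :
    (T m * f : LaurentPolynomial (RatFunc ℚ)).coeff k = f.coeff (k - m) := by
  show (AddMonoidAlgebra.single m (1 : RatFunc ℚ) * f).coeff k = f.coeff (k - m)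
  rw [AddMonoidAlgebra.coeff_single_mul_apply, one_mul, neg_add_eq_sub]

lemma C_mul_coeff (r : RatFunc ℚ) (k : ℤ) (f : LaurentPolynomial (RatFunc ℚ)) :
    (C r * f : LaurentPolynomial (RatFunc ℚ)).coeff k = r * f.coeff k := by
  show (AddMonoidAlgebra.single (0 : ℤ) r * f).coeff k = r * f.coeff k
  rw [AddMonoidAlgebra.coeff_single_mul_apply, neg_zero, zero_add]

lemma mul_C_coeff (f : LaurentPolynomial (RatFunc ℚ)) (r : RatFunc ℚ) (k : ℤ) :
    (f * C r : LaurentPolynomial (RatFunc ℚ)).coeff k = f.coeff k * r := by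
  show (f * AddMonoidAlgebra.single (0 : ℤ) r).coeff k = f.coeff k * r
  rw [AddMonoidAlgebra.coeff_mul_single_apply, neg_zero, add_zero]

lemma P0_coeff : (P 0).coeff (-1 : ℤ) = s0⁻¹ := by
  show ((T 1 - T (-1)) * C (q0 - q0⁻¹)⁻¹ : LaurentPolynomial (RatFunc ℚ)).coeff (-1 : ℤ) = s0⁻¹
  rw [mul_C_coeff, AddMonoidAlgebra.coeff_sub, Finsupp.sub_apply]
  simp only [T_apply]
  norm_num
  rw [show (q0 - q0⁻¹) = -s0 by rw [show s0 = q0⁻¹ - q0 from rfl]; ring, inv_neg]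
  ring

lemma P_coeff : ∀ n, 1 ≤ n → (P n).coeff ((n : ℤ) - 1) =
    ∑ i ∈ Finset.Icc (-1 : ℤ) ((n : ℤ) - 1), (cc n i : RatFunc ℚ) * s0 ^ i := by
  apply two_step_induction
  · show (P 1).coeff ((1 : ℤ) - 1) = ∑ i ∈ Finset.Icc (-1 : ℤ) ((1 : ℤ) - 1), (cc 1 i : RatFunc ℚ) * s0 ^ i
    norm_num
    have hlhs : (P 1).coeff (0 : ℤ) = 1 := by
      show (1 : LaurentPolynomial (RatFunc ℚ)).coeff (0 : ℤ) = 1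
      rw [← T_zero, T_apply]
      norm_num
    rw [hlhs]
    have hIcc : Finset.Icc (-1 : ℤ) 0 = {-1, 0} := by decide
    rw [hIcc, Finset.sum_insert (by decide), Finset.sum_singleton]
    have c1 : cc 1 (-1) = 0 := by decide
    have c2 : cc 1 0 = 1 := by decide
    rw [c1, c2]
    norm_num
  · show (P 2).coeff ((2 : ℤ) - 1) = ∑ i ∈ Finset.Icc (-1 : ℤ) ((2 : ℤ) - 1), (cc 2 i : RatFunc ℚ) * s0 ^ i
    norm_num
    have hP2 : P 2 = -(T 1 * C (q0 - q0⁻¹)) * P 1 + T 1 ^ 2 * P 0 := rfl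
    have hP1 : P 1 = 1 := rfl
    have hlhs : (P 2).coeff (1 : ℤ) = s0 + s0⁻¹ := by
      rw [hP2, hP1, mul_one, AddMonoidAlgebra.coeff_add, Finsupp.add_apply, AddMonoidAlgebra.coeff_neg, Finsupp.neg_apply]
      rw [show (T 1 ^ 2 : LaurentPolynomial (RatFunc ℚ)) = T 2 by rw [T_pow]; norm_num]
      rw [T_mul_coeff, T_mul_coeff]
      norm_num [P0_coeff, C_apply, -map_sub]
      rfl
    rw [hlhs]
    have hIcc : Finset.Icc (-1 : ℤ) 1 = {-1, 0, 1} := by decide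
    rw [hIcc]
    rw [Finset.sum_insert (by decide), Finset.sum_insert (by decide), Finset.sum_singleton]
    have c1 : cc 2 (-1) = 1 := by decide
    have c2 : cc 2 0 = 0 := by decide
    have c3 : cc 2 1 = 1 := by decide
    rw [c1, c2, c3]
    push_cast
    rw [zpow_neg_one, zpow_one, zpow_zero]
    ring
  · intro n ih1 ih2
    obtain ⟨-, htop1, -, -⟩ := cc_prop (n + 1) (by omega)
    obtain ⟨-, -, hbot2, -⟩ := cc_prop (n + 2) (by omega)
    have hcast3 : ((n + 3 : ℕ) : ℤ) - 1 = (n : ℤ) + 2 := by push_cast; ring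
    have hcast2 : ((n + 2 : ℕ) : ℤ) - 1 = (n : ℤ) + 1 := by push_cast; ring
    have hcast1 : ((n + 1 : ℕ) : ℤ) - 1 = (n : ℤ) := by push_cast; ring
    rw [hcast2] at ih2
    rw [hcast1] at ih1
    rw [hcast3]
    have hP : P (n + 3) = -(T 1 * C (q0 - q0⁻¹)) * P (n + 2) + T 1 ^ 2 * P (n + 1) := rfl
    have hlhs : (P (n + 3)).coeff ((n : ℤ) + 2) =
        s0 * (P (n + 2)).coeff ((n : ℤ) + 1) + (P (n + 1)).coeff (n : ℤ) := by
      rw [hP, AddMonoidAlgebra.coeff_add, Finsupp.add_apply, neg_mul, AddMonoidAlgebra.coeff_neg, Finsupp.neg_apply, mul_assoc, T_mul_coeff,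
        C_mul_coeff]
      rw [show (T 1 ^ 2 : LaurentPolynomial (RatFunc ℚ)) = T 2 by rw [T_pow]; norm_num]
      rw [T_mul_coeff]
      rw [show (n : ℤ) + 2 - 1 = (n : ℤ) + 1 by ring, show (n : ℤ) + 2 - 2 = (n : ℤ) by ring]
      rw [show (q0 - q0⁻¹) = -s0 by rw [show s0 = q0⁻¹ - q0 from rfl]; ring]
      ring
    rw [hlhs, ih1, ih2]
    -- now the sum identity
    have hccdef : ∀ i : ℤ, cc (n + 3) i = cc (n + 2) (i - 1) + cc (n + 1) i := fun i => rfl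
    have hsplit : ∑ i ∈ Finset.Icc (-1 : ℤ) ((n : ℤ) + 2), (cc (n + 3) i : RatFunc ℚ) * s0 ^ i =
        (∑ i ∈ Finset.Icc (-1 : ℤ) ((n : ℤ) + 2), (cc (n + 2) (i - 1) : RatFunc ℚ) * s0 ^ i) +
        ∑ i ∈ Finset.Icc (-1 : ℤ) ((n : ℤ) + 2), (cc (n + 1) i : RatFunc ℚ) * s0 ^ i := by
      rw [← Finset.sum_add_distrib]
      refine Finset.sum_congr rfl fun i _ => ?_
      rw [hccdef i]
      push_cast
      ring
    have hB : ∑ i ∈ Finset.Icc (-1 : ℤ) ((n : ℤ) + 2), (cc (n + 1) i : RatFunc ℚ) * s0 ^ i =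
        ∑ i ∈ Finset.Icc (-1 : ℤ) (n : ℤ), (cc (n + 1) i : RatFunc ℚ) * s0 ^ i := by
      rw [Finset.sum_subset (Finset.Icc_subset_Icc_right (by omega : (n : ℤ) ≤ (n : ℤ) + 2))]
      intro i hi hni
      simp only [Finset.mem_Icc] at hi hni
      rw [htop1 i (by push_cast; omega)]
      norm_num
    have hA : ∑ i ∈ Finset.Icc (-1 : ℤ) ((n : ℤ) + 2), (cc (n + 2) (i - 1) : RatFunc ℚ) * s0 ^ i =
        s0 * ∑ i ∈ Finset.Icc (-1 : ℤ) ((n : ℤ) + 1), (cc (n + 2) i : RatFunc ℚ) * s0 ^ i := by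
      have hmap : (Finset.Icc (-2 : ℤ) ((n : ℤ) + 1)).map (addRightEmbedding 1) =
          Finset.Icc (-1 : ℤ) ((n : ℤ) + 2) := by
        rw [Finset.map_add_right_Icc]
        congr 1
      rw [← hmap, Finset.sum_map]
      have step : ∀ i ∈ Finset.Icc (-2 : ℤ) ((n : ℤ) + 1),
          (cc (n + 2) ((addRightEmbedding 1) i - 1) : RatFunc ℚ) * s0 ^ ((addRightEmbedding 1) i)
          = s0 * ((cc (n + 2) i : RatFunc ℚ) * s0 ^ i) := by
        intro i _
        simp only [addRightEmbedding_apply, add_sub_cancel_right]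
        rw [zpow_add₀ s0_ne i 1, zpow_one]
        ring
      rw [Finset.sum_congr rfl step, ← Finset.mul_sum]
      congr 1
      refine (Finset.sum_subset (Finset.Icc_subset_Icc_left (by norm_num : (-2 : ℤ) ≤ -1))
        fun i hi hni => ?_).symm
      simp only [Finset.mem_Icc] at hi hni
      rw [hbot2 i (by omega)]
      norm_num
    rw [hsplit, hA, hB]

theorem stmt_4 (n : ℕ) (hn : 1 ≤ n) :
    ∃ c : ℤ → ℤ,
      c ((n : ℤ) - 1) = 1 ∧
      (∀ i : ℤ, (n : ℤ) - 1 < i → c i = 0) ∧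
      (∀ i : ℤ, i < -1 → c i = 0) ∧
      (Even n ↔ c (-1) ≠ 0) ∧
      specA ((C q0 * T (-1)) ^ (n - 1) * P n) =
        q0 ^ (n - 1) *
          ∑ i ∈ Finset.Icc (-1 : ℤ) ((n : ℤ) - 1), (c i : RatFunc ℚ) * (q0⁻¹ - q0) ^ i := by
  obtain ⟨e, htop, hbot, hm⟩ := cc_prop n hn
  refine ⟨cc n, e, htop, hbot, ?_, ?_⟩
  · rw [hm]
    by_cases hev : Even n <;> simp [hev]
  · show ((C q0 * T (-1)) ^ (n - 1) * P n : LaurentPolynomial (RatFunc ℚ)).coeff 0 = _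
    have hpow : (C q0 * T (-1) : LaurentPolynomial (RatFunc ℚ)) ^ (n - 1)
        = C (q0 ^ (n - 1)) * T (-((n - 1 : ℕ) : ℤ)) := by
      rw [mul_pow, ← map_pow, T_pow]
      congr 1
      ring
    rw [hpow, mul_assoc, C_mul_coeff, T_mul_coeff, zero_sub, neg_neg]
    rw [show ((n - 1 : ℕ) : ℤ) = (n : ℤ) - 1 by omega]
    rw [P_coeff n hn]
    rfl
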